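/- Let m ∈ ℕ, T₀ ∈ ℝ, and let N : [T₀,∞) → (m × m real matrices) be continuous with every entry of N(t) nonnegative for every t ≥ T₀. Let P : [T₀,∞) → (m × m real matrices) be differentiable with P'(t) = N(t)·P(t) for all t ≥ T₀ and P(T₀) = 1. Then every entry of P(t) is nonnegative for every t ≥ T₀. -/

import Mathlib

open Filter Topology

/-- Positivity of the fundamental matrix (used in Proposition 8 ('mon') of the
paper): if `N(t)` is entrywise nonnegative for `t ≥ T₀` and `P' = N·P`,
`P(T₀) = 1`, then `P(t)` is entrywise nonnegative for every `t ≥ T₀`. -/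
theorem stmt_13 (m : ℕ) (T₀ : ℝ)
    (N : ℝ → Matrix (Fin m) (Fin m) ℝ)
    (hNc : ∀ i j, ContinuousOn (fun t => N t i j) (Set.Ici T₀))
    (hN0 : ∀ t ≥ T₀, ∀ i j, 0 ≤ N t i j)
    (P : ℝ → Matrix (Fin m) (Fin m) ℝ)
    (hP : ∀ t ≥ T₀, ∀ i j,
      HasDerivWithinAt (fun s => P s i j) ((N t * P t) i j) (Set.Ici T₀) t)
    (hP0 : P T₀ = 1) :
    ∀ t ≥ T₀, ∀ i j, 0 ≤ P t i j := by
  have hPc : ∀ i j, ContinuousOn (fun s => P s i j) (Set.Ici T₀) :=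
    fun i j t ht => (hP t ht i j).continuousWithinAt
  intro t1 ht1 i0 j0
  rcases eq_or_lt_of_le ht1 with h | h
  · rw [← h, hP0, Matrix.one_apply]
    split <;> norm_num
  -- now T₀ < t1
  set I : Set ℝ := Set.Icc T₀ t1 with hI
  have hIcpt : IsCompact I := isCompact_Icc
  have hIne : I.Nonempty := Set.nonempty_Icc.2 ht1
  have hIsub : I ⊆ Set.Ici T₀ := Set.Icc_subset_Ici_self
  have hg : ContinuousOn (fun t => ∑ i, ∑ j, N t i j) I := by
    apply continuousOn_finset_sum
    intro i _
    apply continuousOn_finset_sum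
    intro j _
    exact (hNc i j).mono hIsub
  obtain ⟨t₂, ht₂, hK₀⟩ := hIcpt.exists_isMaxOn hIne hg
  set K₀ : ℝ := ∑ i, ∑ j, N t₂ i j with hK₀def
  set K : ℝ := K₀ + 1 with hKdef
  have hrow : ∀ t ∈ I, ∀ i, ∑ k, N t i k ≤ K₀ := by
    intro t ht i
    calc ∑ k, N t i k ≤ ∑ i', ∑ j', N t i' j' :=
          Finset.single_le_sum (f := fun i' => ∑ j', N t i' j')
            (fun i' _ => Finset.sum_nonneg fun j' _ => hN0 t (hIsub ht) i' j')
            (Finset.mem_univ i)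
      _ ≤ K₀ := hK₀ ht
  have key : ∀ ε > (0:ℝ), ∀ t ∈ I, ∀ i j,
      0 < P t i j + ε * Real.exp (K * (t - T₀)) := by
    intro ε hε
    set Q : ℝ → Fin m → Fin m → ℝ :=
      fun t i j => P t i j + ε * Real.exp (K * (t - T₀)) with hQdef
    by_contra hcon
    push_neg at hcon
    obtain ⟨t', ht', i', j', hle⟩ := hcon
    set S : Set ℝ := {t | t ∈ I ∧ ∃ i j, Q t i j ≤ 0} with hSdef
    have hQc : ∀ i j, ContinuousOn (fun t => Q t i j) I := by
      intro i j
      exact ((hPc i j).mono hIsub).add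
        (continuousOn_const.mul ((Real.continuous_exp.comp
          (continuous_const.mul (continuous_id.sub continuous_const))).continuousOn))
    have hSclosed : IsClosed S := by
      have : S = ⋃ i, ⋃ j, I ∩ (fun t => Q t i j) ⁻¹' Set.Iic 0 := by
        ext t
        simp only [hSdef, Set.mem_setOf_eq, Set.mem_iUnion, Set.mem_inter_iff,
          Set.mem_preimage, Set.mem_Iic]
        constructor
        · rintro ⟨hti, i, j, hq⟩; exact ⟨i, j, hti, hq⟩
        · rintro ⟨i, j, hti, hq⟩; exact ⟨hti, i, j, hq⟩
      rw [this]
      exact isClosed_iUnion_of_finite fun i => isClosed_iUnion_of_finite fun j =>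
        (hQc i j).preimage_isClosed_of_isClosed isClosed_Icc isClosed_Iic
    have hSne : S.Nonempty := ⟨t', ht', i', j', hle⟩
    have hSbdd : BddBelow S := ⟨T₀, fun x hx => hx.1.1⟩
    set τ : ℝ := sInf S with hτdef
    have hτS : τ ∈ S := hSclosed.csInf_mem hSne hSbdd
    obtain ⟨hτI, i, j, hQτ⟩ := hτS
    have hτ0 : T₀ < τ := by
      rcases eq_or_lt_of_le hτI.1 with h' | h'
      · exfalso
        have h1 : Q T₀ i j = (1 : Matrix (Fin m) (Fin m) ℝ) i j + ε := by
          simp [hQdef, hP0]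
        have h2 : (0:ℝ) ≤ (1 : Matrix (Fin m) (Fin m) ℝ) i j := by
          rw [Matrix.one_apply]; split <;> norm_num
        rw [← h'] at hQτ
        rw [h1] at hQτ
        linarith
      · exact h'
    have hlt : ∀ s, T₀ ≤ s → s < τ → ∀ k l, 0 < Q s k l := by
      intro s hs1 hs2 k l
      by_contra hcon2
      push_neg at hcon2
      have hsS : s ∈ S := ⟨⟨hs1, le_trans hs2.le hτI.2⟩, k, l, hcon2⟩
      exact absurd (csInf_le hSbdd hsS) (not_le.2 hs2)
    have hQτ0 : ∀ k l, 0 ≤ Q τ k l := by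
      intro k l
      have hne : (𝓝[Set.Ioo T₀ τ] τ).NeBot := by
        rw [nhdsWithin_Ioo_eq_nhdsLT hτ0]
        infer_instance
      have htd : Filter.Tendsto (fun s => Q s k l) (𝓝[Set.Ioo T₀ τ] τ) (𝓝 (Q τ k l)) :=
        ((hQc k l τ hτI).mono (Set.Ioo_subset_Icc_self.trans
          (Set.Icc_subset_Icc le_rfl hτI.2)))
      refine ge_of_tendsto htd ?_
      filter_upwards [self_mem_nhdsWithin] with s hs
      exact (hlt s hs.1.le hs.2 k l).le
    have hQτeq : Q τ i j = 0 := le_antisymm hQτ (hQτ0 i j)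
    have hτmem : Set.Ici T₀ ∈ 𝓝 τ := Ici_mem_nhds hτ0
    set e : ℝ := Real.exp (K * (τ - T₀)) with hedef
    have he : 0 < e := Real.exp_pos _
    have hd : HasDerivAt (fun s => Q s i j)
        ((N τ * P τ) i j + ε * (e * K)) τ := by
      have h1 : HasDerivAt (fun s => P s i j) ((N τ * P τ) i j) τ :=
        (hP τ hτ0.le i j).hasDerivAt hτmem
      have h2 : HasDerivAt (fun s : ℝ => K * (s - T₀)) K τ := by
        simpa using ((hasDerivAt_id τ).sub_const T₀).const_mul K
      have h3 : HasDerivAt (fun s : ℝ => ε * Real.exp (K * (s - T₀))) (ε * (e * K)) τ := by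
        exact (h2.exp).const_mul ε
      exact h1.add h3
    have hNP : -(ε * e * K₀) ≤ (N τ * P τ) i j := by
      rw [Matrix.mul_apply]
      calc -(ε * e * K₀) ≤ -(ε * e * ∑ k, N τ i k) := by
            have h' := hrow τ hτI i
            have h'' : ε * e * (∑ k, N τ i k) ≤ ε * e * K₀ :=
              mul_le_mul_of_nonneg_left h' (by positivity)
            linarith
        _ = ∑ k, N τ i k * (-(ε * e)) := by
            rw [← Finset.sum_mul]; ring
        _ ≤ ∑ k, N τ i k * P τ k j := by
            apply Finset.sum_le_sum
            intro k _
            apply mul_le_mul_of_nonneg_left _ (hN0 τ hτ0.le i k)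
            have := hQτ0 k j
            simp only [hQdef] at this
            linarith [this]
    have hdpos : 0 < (N τ * P τ) i j + ε * (e * K) := by
      have : ε * (e * K) = ε * e * K₀ + ε * e := by rw [hKdef]; ring
      nlinarith
    have hslope := hasDerivAt_iff_tendsto_slope.mp hd
    have hev : ∀ᶠ s in 𝓝[≠] τ, 0 < slope (fun s => Q s i j) τ s :=
      hslope.eventually (eventually_gt_nhds hdpos)
    have h3 : ∀ᶠ s in 𝓝[<] τ, 0 < slope (fun s => Q s i j) τ s :=
      hev.filter_mono (nhdsWithin_mono τ (fun x hx => ne_of_lt hx))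
    have h4 : Set.Ioo T₀ τ ∈ 𝓝[<] τ := Ioo_mem_nhdsLT hτ0
    obtain ⟨s, hs1, hs2⟩ := (h3.and (eventually_of_mem h4 fun x hx => hx)).exists
    have hstlt : s - τ < 0 := sub_neg.2 hs2.2
    rw [slope_def_field] at hs1
    have hnum : Q s i j - Q τ i j < 0 := by
      rcases div_pos_iff.mp hs1 with ⟨_, hb⟩ | ⟨ha, _⟩
      · linarith
      · exact ha
    rw [hQτeq] at hnum
    have : Q s i j < 0 := by linarith
    exact absurd this (not_lt.2 (hlt s hs2.1.le hs2.2 i j).le)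
  -- conclude
  by_contra hneg
  push_neg at hneg
  set C : ℝ := Real.exp (K * (t1 - T₀)) with hCdef
  have hC : 0 < C := Real.exp_pos _
  have hεpos : 0 < -P t1 i0 j0 / (2 * C) := div_pos (by linarith) (by positivity)
  have := key (-P t1 i0 j0 / (2 * C)) hεpos t1 ⟨ht1, le_rfl⟩ i0 j0
  rw [← hCdef] at this
  have heq : P t1 i0 j0 + -P t1 i0 j0 / (2 * C) * C = P t1 i0 j0 / 2 := by
    field_simp; ring
  rw [heq] at this
  linarith
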